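/- Let w be the fixed point of the morphism φ from the construction. If x_i y_j is a factor of w (with i ∈ {1,…,6}, j ∈ {1,…,6}), then y_j x_i is not a factor of w. -/

import Mathlib

/-- The 12-letter alphabet `{x₁,…,x₆,y₁,…,y₆}`: `(false, i)` is `x_{i+1}`
and `(true, j)` is `y_{j+1}`. -/
abbrev Letter : Type := Bool × Fin 6

/-- The letter `x_{i+1}`. -/
def X (i : Fin 6) : Letter := (false, i)

/-- The letter `y_{j+1}`. -/
def Y (j : Fin 6) : Letter := (true, j)

/-- The morphism of the construction: `x₁↦x₁x₂y₁y₂, x₂↦x₁x₃y₁y₃, x₃↦x₁x₄y₁y₄,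
x₄↦x₁x₅y₁y₅, x₅↦x₁x₆y₁y₆, x₆↦x₂x₃y₂y₃, y₁↦x₂x₄y₂y₅, y₂↦x₂x₅y₃y₄, y₃↦x₂x₆y₂y₆,
y₄↦x₃x₄y₃y₅, y₅↦x₃x₅y₃y₆, y₆↦x₃x₆y₄y₅`. -/
def phi : Letter → List Letter := fun a =>
  [[X 0, X 1, Y 0, Y 1], [X 0, X 2, Y 0, Y 2], [X 0, X 3, Y 0, Y 3],
   [X 0, X 4, Y 0, Y 4], [X 0, X 5, Y 0, Y 5], [X 1, X 2, Y 1, Y 2],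
   [X 1, X 3, Y 1, Y 4], [X 1, X 4, Y 2, Y 3], [X 1, X 5, Y 1, Y 5],
   [X 2, X 3, Y 2, Y 4], [X 2, X 4, Y 2, Y 5], [X 2, X 5, Y 3, Y 4]].getD
    ((if a.1 then 6 else 0) + a.2.val) []

/-- A monoid morphism applied to a word. -/
def applyM {α : Type*} (φ : α → List α) (u : List α) : List α := u.flatMap φ

/-- The block of `len` consecutive letters of `w` starting at position `i`. -/
def toListW {α : Type*} (w : ℕ → α) (i len : ℕ) : List α :=
  (List.range len).map fun k => w (i + k)

/-- `v` is a factor (subword) of the right-infinite word `w`. -/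
def IsFactor {α : Type*} (v : List α) (w : ℕ → α) : Prop :=
  ∃ i, toListW w i v.length = v

/-- `v` is a prefix of the right-infinite word `w`. -/
def IsPrefixW {α : Type*} (v : List α) (w : ℕ → α) : Prop :=
  toListW w 0 v.length = v

/-- `w` is the fixed point `φ^ω(x₁)` of the (4-uniform) morphism `phi`:
for every `n`, `phi^n(x₁)` (a word of length `4^n`) is a prefix of `w`. -/
def IsFixedPointWord (w : ℕ → Letter) : Prop :=
  ∀ n : ℕ, toListW w 0 (4 ^ n) = (applyM phi)^[n] [X 0]


namespace Stmt7Aux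

/-- `r`-th letter of `phi a`. -/
def pget (a : Letter) (r : ℕ) : Letter := (phi a).getD r (X 0)

/-- Over-approximation of the set of adjacent pairs of letters in `w`. -/
def goodL : List (Letter × Letter) :=
 [(X 0, X 1), (X 0, X 2), (X 0, X 3), (X 0, X 4), (X 0, X 5),
  (X 1, X 2), (X 1, X 3), (X 1, X 4), (X 1, X 5), (X 1, Y 0),
  (X 2, X 3), (X 2, X 4), (X 2, X 5), (X 2, Y 0), (X 2, Y 1),
  (X 3, Y 0), (X 3, Y 1), (X 3, Y 2), (X 4, Y 0), (X 4, Y 2),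
  (X 5, Y 0), (X 5, Y 1), (X 5, Y 3),
  (Y 0, Y 1), (Y 0, Y 2), (Y 0, Y 3), (Y 0, Y 4), (Y 0, Y 5),
  (Y 1, X 0), (Y 1, X 1), (Y 1, Y 2), (Y 1, Y 4), (Y 1, Y 5),
  (Y 2, X 0), (Y 2, X 1), (Y 2, X 2), (Y 2, Y 3), (Y 2, Y 4), (Y 2, Y 5),
  (Y 3, X 0), (Y 3, X 1), (Y 3, X 2), (Y 3, Y 4),
  (Y 4, X 0), (Y 4, X 1), (Y 4, X 2),
  (Y 5, X 0), (Y 5, X 1), (Y 5, X 2)]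

def good (p : Letter × Letter) : Prop := p ∈ goodL

instance : DecidablePred good := fun p => inferInstanceAs (Decidable (p ∈ goodL))

lemma philen (a : Letter) : (phi a).length = 4 := by
  revert a; decide

set_option maxRecDepth 100000 in
lemma C3 : ∀ a : Letter, ∀ r : ℕ, r < 3 →
    good (pget a r, pget a (r + 1)) := by decide

set_option maxRecDepth 100000 in
lemma C4 : ∀ p : Letter × Letter, good p → good (pget p.1 3, pget p.2 0) := by
  decide

set_option maxRecDepth 100000 in
lemma C5 : ∀ i j : Fin 6, good (X i, Y j) → good (Y j, X i) → False := by
  decide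

lemma applyM_length (u : List Letter) : (applyM phi u).length = 4 * u.length := by
  induction u with
  | nil => rfl
  | cons a t ih =>
    simp only [applyM, List.flatMap_cons, List.length_append, List.length_cons,
      philen] at *
    omega

lemma iter_length (n : ℕ) : ((applyM phi)^[n] [X 0]).length = 4 ^ n := by
  induction n with
  | zero => rfl
  | succ n ih =>
    rw [Function.iterate_succ_apply', applyM_length, ih, pow_succ]
    ring

lemma fm (u : List Letter) : ∀ k r : ℕ, k < u.length → r < 4 →
    (applyM phi u).getD (4 * k + r) (X 0) = pget (u.getD k (X 0)) r := by
  induction u with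
  | nil => intro k r hk _; simp at hk
  | cons a t ih =>
    intro k r hk hr
    match k with
    | 0 =>
      have h4 : r < (phi a).length := by rw [philen]; omega
      simp only [applyM, List.flatMap_cons]
      rw [show 4 * 0 + r = r by ring, List.getD_append _ _ _ _ h4]
      rfl
    | k + 1 =>
      have hlen : (phi a).length = 4 := philen a
      have hge : 4 * (k + 1) + r = (phi a).length + (4 * k + r) := by omega
      simp only [applyM, List.flatMap_cons]
      rw [hge, List.getD_append_right _ _ _ _ (by omega),
        Nat.add_sub_cancel_left]
      exact ih k r (by simpa using hk) hr

lemma toListW_getD (w : ℕ → Letter) (len m : ℕ) (hm : m < len) :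
    (toListW w 0 len).getD m (X 0) = w m := by
  rw [toListW, List.getD_eq_getElem]
  · simp
  · simpa using hm

lemma block (w : ℕ → Letter) (hw : IsFixedPointWord w) (k r : ℕ) (hr : r < 4) :
    w (4 * k + r) = pget (w k) r := by
  have hk : k < 4 ^ k := Nat.lt_pow_self (by norm_num : 1 < 4)
  have hlt : 4 * k + r < 4 ^ (k + 1) := by
    have : 4 * k + r < 4 * (k + 1) := by omega
    calc 4 * k + r < 4 * (k + 1) := this
    _ ≤ 4 * 4 ^ k := by omega
    _ = 4 ^ (k + 1) := by rw [pow_succ]; ring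
  have h1 := toListW_getD w (4 ^ (k + 1)) (4 * k + r) hlt
  rw [hw (k + 1), Function.iterate_succ_apply'] at h1
  have h2 := fm ((applyM phi)^[k] [X 0]) k r (by rw [iter_length]; exact hk) hr
  rw [h2] at h1
  have h3 := toListW_getD w (4 ^ k) k hk
  rw [hw k] at h3
  rw [h3] at h1
  exact h1.symm

lemma adj (w : ℕ → Letter) (hw : IsFixedPointWord w) :
    ∀ m : ℕ, good (w m, w (m + 1)) := by
  intro m
  induction m using Nat.strong_induction_on with
  | _ m ih =>
    obtain ⟨q, r, hr, hm⟩ : ∃ q r, r < 4 ∧ m = 4 * q + r :=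
      ⟨m / 4, m % 4, Nat.mod_lt _ (by norm_num), (Nat.div_add_mod m 4).symm⟩
    have hrc : r = 0 ∨ r = 1 ∨ r = 2 ∨ r = 3 := by omega
    rcases hrc with h0 | h1 | h2 | h3
    · subst h0; subst hm
      rw [block w hw q 0 (by norm_num), show 4 * q + 0 + 1 = 4 * q + 1 by ring,
        block w hw q 1 (by norm_num)]
      exact C3 (w q) 0 (by norm_num)
    · subst h1; subst hm
      rw [block w hw q 1 (by norm_num), show 4 * q + 1 + 1 = 4 * q + 2 by ring,
        block w hw q 2 (by norm_num)]
      exact C3 (w q) 1 (by norm_num)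
    · subst h2; subst hm
      rw [block w hw q 2 (by norm_num), show 4 * q + 2 + 1 = 4 * q + 3 by ring,
        block w hw q 3 (by norm_num)]
      exact C3 (w q) 2 (by norm_num)
    · subst h3; subst hm
      rw [block w hw q 3 (by norm_num), show 4 * q + 3 + 1 = 4 * (q + 1) + 0 by ring,
        block w hw (q + 1) 0 (by norm_num)]
      have hq : q < 4 * q + 3 := by omega
      exact C4 (w q, w (q + 1)) (ih q hq)

lemma factor_pair {a b : Letter} {w : ℕ → Letter} (h : IsFactor [a, b] w) :
    ∃ m, w m = a ∧ w (m + 1) = b := by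
  obtain ⟨m, hm⟩ := h
  have h2 : toListW w m 2 = [a, b] := hm
  have h3 : toListW w m 2 = [w m, w (m + 1)] := by
    simp [toListW, List.range_succ]
  rw [h3] at h2
  simp only [List.cons.injEq] at h2
  exact ⟨m, h2.1, h2.2.1⟩

end Stmt7Aux


theorem stmt7 (w : ℕ → Letter) (hw : IsFixedPointWord w)
    (i j : Fin 6) (h : IsFactor [X i, Y j] w) :
    ¬ IsFactor [Y j, X i] w := by
  intro h'
  obtain ⟨m, hm1, hm2⟩ := Stmt7Aux.factor_pair h
  obtain ⟨m', hm1', hm2'⟩ := Stmt7Aux.factor_pair h'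
  have g1 := Stmt7Aux.adj w hw m
  have g2 := Stmt7Aux.adj w hw m'
  rw [hm1, hm2] at g1
  rw [hm1', hm2'] at g2
  exact Stmt7Aux.C5 i j g1 g2
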